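/- arXiv:1403.6927 — 2 statements merged into one kernel-verified Lean document; each statement's English description precedes it below -/
import Mathlib

section
/- For α > 1/2, λ ≥ 0 and every n ≥ 2, the connection formula C_n^{(α-1)}(x) = Q_{n,λ}^{(α)}(x) - d_{n-2}(α) Q_{n-2,λ}^{(α)}(x) holds, where d_m(α) = ξ_m^{(α)} · ‖C_m^{(α)}‖_μ² / ‖Q_{m,λ}^{(α)}‖_S², with ξ_m^{(α)} = (m+2)(m+1)/(4(m+α+1)(m+α)), ‖C_m^{(α)}‖_μ² = ∫_{-1}^{1} [C_m^{(α)}(x)]² (1-x²)^{α-1/2} dx, and ‖Q_{m,λ}^{(α)}‖_S² = ⟨Q_{m,λ}^{(α)}, Q_{m,λ}^{(α)}⟩_S. -/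
open Polynomial MeasureTheory Real Set

/-- The Gegenbauer inner product `∫ f g (1-x²)^{α-1/2}` on `(-1,1)`. -/
noncomputable def gegInner (α : ℝ) (f g : Polynomial ℝ) : ℝ :=
  ∫ x in Set.Ioo (-1 : ℝ) 1, f.eval x * g.eval x * (1 - x ^ 2) ^ (α - 1/2)

/-- `C` is the monic Gegenbauer polynomial of degree `n` for parameter `α`. -/
def IsMonicGegenbauer (α : ℝ) (n : ℕ) (C : Polynomial ℝ) : Prop :=
  C.Monic ∧ C.natDegree = n ∧
    ∀ p : Polynomial ℝ, p.degree < (n : ℕ) → gegInner α C p = 0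

/-- The Gegenbauer–Sobolev inner product. -/
noncomputable def sobInner (α lam : ℝ) (f g : Polynomial ℝ) : ℝ :=
  gegInner α f g + lam * gegInner α (derivative f) (derivative g)

/-- `Q` is the monic Gegenbauer–Sobolev polynomial of degree `n`. -/
def IsMonicGegSobolev (α lam : ℝ) (n : ℕ) (Q : Polynomial ℝ) : Prop :=
  Q.Monic ∧ Q.natDegree = n ∧
    ∀ p : Polynomial ℝ, p.degree < (n : ℕ) → sobInner α lam Q p = 0

namespace GegAux

lemma one_sub_sq_pos {x : ℝ} (hx : x ∈ Set.Ioo (-1:ℝ) 1) : 0 < 1 - x^2 := by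
  nlinarith [hx.1, hx.2]

lemma weight_pos {β x : ℝ} (hx : x ∈ Set.Ioo (-1:ℝ) 1) : 0 < (1 - x^2) ^ β :=
  Real.rpow_pos_of_pos (one_sub_sq_pos hx) _

lemma contOn_weight {r : ℝ} {s : Set ℝ} (hs : ∀ x ∈ s, 1 - x^2 ≠ 0) :
    ContinuousOn (fun x : ℝ => (1 - x^2) ^ r) s := by
  apply ContinuousOn.rpow_const
  · fun_prop
  · exact fun x hx => Or.inl (hs x hx)

/-- integrability of the pure weight -/
lemma integrableOn_weight {r : ℝ} (hr : -1 < r) :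
    IntegrableOn (fun x => (1 - x^2) ^ r) (Set.Ioo (-1:ℝ) 1) := by
  have key : ∀ x : ℝ, x ∈ Set.Ioo (-1:ℝ) 1 → 0 ≤ x →
      (1 - x^2) ^ r ≤ (max 1 (2^r)) * (1-x) ^ r := by
    intro x hx hx0
    have h1 : (0:ℝ) < 1 - x := by nlinarith [hx.2]
    have h2 : (0:ℝ) < 1 + x := by nlinarith [hx.1]
    have e : (1 - x^2 : ℝ) = (1-x) * (1+x) := by ring
    rw [e, Real.mul_rpow h1.le h2.le, mul_comm]
    gcongr ?_ * _
    rcases le_or_gt 0 r with h | h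
    · exact le_max_of_le_right (Real.rpow_le_rpow h2.le (by linarith) h)
    · refine le_max_of_le_left ?_
      calc (1+x)^r ≤ (1:ℝ)^r :=
            Real.rpow_le_rpow_of_nonpos one_pos (by linarith) h.le
        _ = 1 := Real.one_rpow r
  have hIoo : Set.Ioo (-1:ℝ) 1 = Set.Ioc (-1:ℝ) 0 ∪ Set.Ioo (0:ℝ) 1 := by
    ext x; simp only [Set.mem_Ioo, Set.mem_union, Set.mem_Ioc]
    constructor
    · rintro ⟨h1, h2⟩; rcases le_or_gt x 0 with h | h
      · exact Or.inl ⟨h1, h⟩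
      · exact Or.inr ⟨h, h2⟩
    · rintro (⟨h1, h2⟩ | ⟨h1, h2⟩) <;> constructor <;> linarith
  rw [hIoo]
  apply IntegrableOn.union
  · -- on Ioc (-1) 0, dominated by C * (1+x)^r
    have hint : IntegrableOn (fun x : ℝ => (max 1 (2^r)) * (1+x) ^ r) (Set.Ioc (-1:ℝ) 0) := by
      apply Integrable.const_mul
      have h0 : IntervalIntegrable (fun x : ℝ => x ^ r) volume 0 1 :=
        intervalIntegral.intervalIntegrable_rpow' hr
      have h1 : IntervalIntegrable (fun x : ℝ => (x + 1) ^ r) volume (0-1) (1-1) :=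
        h0.comp_add_right 1
      rw [intervalIntegrable_iff] at h1
      simp only [zero_sub, sub_self] at h1
      show IntegrableOn (fun x : ℝ => (1+x) ^ r) (Set.Ioc (-1:ℝ) 0)
      simpa [Set.uIoc_of_le (by norm_num : (-1:ℝ) ≤ 0), add_comm] using h1
    apply hint.mono'
    · apply ContinuousOn.aestronglyMeasurable _ measurableSet_Ioc
      exact contOn_weight (fun x hx => by nlinarith [hx.1, hx.2])
    · rw [ae_restrict_iff' measurableSet_Ioc]
      filter_upwards with x hx
      have hx' : -x ∈ Set.Ioo (-1:ℝ) 1 := by constructor <;> [linarith [hx.2]; linarith [hx.1]]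
      have := key (-x) hx' (by linarith [hx.2])
      rw [Real.norm_eq_abs, abs_of_pos (weight_pos ⟨by linarith [hx.1], by linarith [hx.2]⟩)]
      calc (1 - x^2) ^ r = (1 - (-x)^2) ^ r := by ring_nf
        _ ≤ (max 1 (2^r)) * (1 - (-x)) ^ r := this
        _ = (max 1 (2^r)) * (1 + x) ^ r := by ring_nf
  · -- on Ioo 0 1, dominated by C * (1-x)^r
    have hint : IntegrableOn (fun x : ℝ => (max 1 (2^r)) * (1-x) ^ r) (Set.Ioo (0:ℝ) 1) := by
      apply Integrable.const_mul
      have h0 : IntervalIntegrable (fun x : ℝ => x ^ r) volume 0 1 :=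
        intervalIntegral.intervalIntegrable_rpow' hr
      have h1 : IntervalIntegrable (fun x : ℝ => (1 - x) ^ r) volume (1-0) (1-1) :=
        h0.comp_sub_left 1
      replace h1 := h1.symm
      rw [intervalIntegrable_iff] at h1
      simp only [sub_self, sub_zero] at h1
      rw [Set.uIoc_of_le (by norm_num : (0:ℝ) ≤ 1)] at h1
      exact h1.mono_set Set.Ioo_subset_Ioc_self
    apply hint.mono'
    · apply ContinuousOn.aestronglyMeasurable _ measurableSet_Ioo
      exact contOn_weight (fun x hx => by nlinarith [hx.1, hx.2])
    · rw [ae_restrict_iff' measurableSet_Ioo]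
      filter_upwards with x hx
      have hx' : x ∈ Set.Ioo (-1:ℝ) 1 := ⟨by linarith [hx.1], hx.2⟩
      rw [Real.norm_eq_abs, abs_of_pos (weight_pos hx')]
      exact key x hx' hx.1.le

end GegAux

namespace GegAux

/-- Integrability of a polynomial against the weight. -/
lemma integrableOn_poly_weight {r : ℝ} (hr : -1 < r) (p : Polynomial ℝ) :
    IntegrableOn (fun x => p.eval x * (1 - x^2) ^ r) (Set.Ioo (-1:ℝ) 1) := by
  obtain ⟨M, hM⟩ := (isCompact_Icc (a := (-1:ℝ)) (b := 1)).exists_bound_of_continuousOn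
    (p.continuous_aeval.continuousOn)
  apply ((integrableOn_weight hr).const_mul M).mono'
  · apply ContinuousOn.aestronglyMeasurable _ measurableSet_Ioo
    exact (p.continuous_aeval.continuousOn).mul
      (contOn_weight (fun x hx => (one_sub_sq_pos hx).ne'))
  · rw [ae_restrict_iff' measurableSet_Ioo]
    filter_upwards with x hx
    have hw := weight_pos (β := r) hx
    rw [Real.norm_eq_abs, abs_mul, abs_of_pos hw]
    have h1 : |p.eval x| ≤ M := by
      have := hM x (Set.mem_Icc.mpr ⟨hx.1.le, hx.2.le⟩)
      simpa [Real.norm_eq_abs, Polynomial.aeval_def, Polynomial.eval₂_eq_eval_map] using this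
    exact mul_le_mul_of_nonneg_right h1 hw.le

lemma integrable_gi {β : ℝ} (hβ : -1/2 < β) (f g : Polynomial ℝ) :
    IntegrableOn (fun x => f.eval x * g.eval x * (1 - x^2) ^ (β - 1/2))
      (Set.Ioo (-1:ℝ) 1) := by
  have := integrableOn_poly_weight (r := β - 1/2) (by linarith) (f * g)
  simpa [Polynomial.eval_mul] using this

lemma gegInner_comm (β : ℝ) (f g : Polynomial ℝ) : gegInner β f g = gegInner β g f := by
  unfold gegInner; congr 1; ext x; ring

lemma gegInner_add_right {β : ℝ} (hβ : -1/2 < β) (f g h : Polynomial ℝ) :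
    gegInner β f (g + h) = gegInner β f g + gegInner β f h := by
  unfold gegInner
  rw [← integral_add (integrable_gi hβ f g) (integrable_gi hβ f h)]
  congr 1; ext x; simp [Polynomial.eval_add]; ring

lemma gegInner_smul_right (β c : ℝ) (f g : Polynomial ℝ) :
    gegInner β f (c • g) = c * gegInner β f g := by
  unfold gegInner
  rw [← smul_eq_mul, ← integral_smul]
  congr 1; ext x; simp [Polynomial.eval_smul, smul_eq_mul]; ring

lemma gegInner_sub_right {β : ℝ} (hβ : -1/2 < β) (f g h : Polynomial ℝ) :
    gegInner β f (g - h) = gegInner β f g - gegInner β f h := by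
  have : g - h = g + (-1 : ℝ) • h := by ring_nf; simp [sub_eq_add_neg]
  rw [this, gegInner_add_right hβ, gegInner_smul_right]; ring

lemma gegInner_add_left {β : ℝ} (hβ : -1/2 < β) (f g h : Polynomial ℝ) :
    gegInner β (f + g) h = gegInner β f h + gegInner β g h := by
  rw [gegInner_comm, gegInner_add_right hβ, gegInner_comm β h f, gegInner_comm β h g]

lemma gegInner_smul_left (β c : ℝ) (f g : Polynomial ℝ) :
    gegInner β (c • f) g = c * gegInner β f g := by
  rw [gegInner_comm, gegInner_smul_right, gegInner_comm]

lemma gegInner_sub_left {β : ℝ} (hβ : -1/2 < β) (f g h : Polynomial ℝ) :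
    gegInner β (f - g) h = gegInner β f h - gegInner β g h := by
  rw [gegInner_comm, gegInner_sub_right hβ, gegInner_comm β h f, gegInner_comm β h g]

lemma gegInner_self_nonneg (β : ℝ) (f : Polynomial ℝ) : 0 ≤ gegInner β f f := by
  apply setIntegral_nonneg measurableSet_Ioo
  intro x hx
  have := weight_pos (β := β - 1/2) hx
  nlinarith [sq_nonneg (f.eval x)]

/-- Positive definiteness. -/
lemma eq_zero_of_gegInner_self {β : ℝ} (hβ : -1/2 < β) {f : Polynomial ℝ}
    (h : gegInner β f f = 0) : f = 0 := by
  by_contra hf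
  have hint := integrable_gi hβ f f
  have hae : (fun x => f.eval x * f.eval x * (1 - x^2) ^ (β - 1/2))
      =ᵐ[volume.restrict (Set.Ioo (-1:ℝ) 1)] 0 := by
    rw [← MeasureTheory.integral_eq_zero_iff_of_nonneg_ae _ hint]
    · exact h
    · rw [Filter.EventuallyLE, ae_restrict_iff' measurableSet_Ioo]
      filter_upwards with x hx
      have := weight_pos (β := β - 1/2) hx
      simp only [Pi.zero_apply]
      nlinarith [sq_nonneg (f.eval x)]
  rw [Filter.EventuallyEq, ae_restrict_iff' measurableSet_Ioo] at hae
  have hroots : (Set.Ioo (-1:ℝ) 1) ≤ᵐ[volume] {x | f.IsRoot x} := by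
    filter_upwards [hae] with x hx hmem
    have h0 := hx hmem
    have hw := weight_pos (β := β - 1/2) hmem
    simp only [Pi.zero_apply] at h0
    have h2 : f.eval x * f.eval x = 0 := by
      rcases mul_eq_zero.mp h0 with h' | h'
      · exact h'
      · exact absurd h' hw.ne'
    exact mul_self_eq_zero.mp h2
  have hfin : (volume {x | f.IsRoot x}) = 0 :=
    (Polynomial.finite_setOf_isRoot hf).measure_zero _
  have : volume (Set.Ioo (-1:ℝ) 1) ≤ volume {x | f.IsRoot x} + 0 := by
    simpa using (measure_mono_ae hroots)
  rw [hfin] at this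
  simp [Real.volume_Ioo] at this
  exact absurd this (by norm_num)

lemma gegInner_self_pos {β : ℝ} (hβ : -1/2 < β) {f : Polynomial ℝ} (hf : f ≠ 0) :
    0 < gegInner β f f :=
  lt_of_le_of_ne (gegInner_self_nonneg β f)
    (fun h => hf (eq_zero_of_gegInner_self hβ h.symm))

end GegAux

namespace GegAux

lemma setIntegral_Ioo_comp_neg (F : ℝ → ℝ) :
    ∫ x in Set.Ioo (-1:ℝ) 1, F (-x) = ∫ x in Set.Ioo (-1:ℝ) 1, F x := by
  rw [← integral_indicator measurableSet_Ioo, ← integral_indicator measurableSet_Ioo]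
  rw [show (∫ x, Set.indicator (Set.Ioo (-1:ℝ) 1) F x) =
      ∫ x, Set.indicator (Set.Ioo (-1:ℝ) 1) F (-x) from (integral_neg_eq_self _ _).symm]
  congr 1; ext x
  by_cases hx : x ∈ Set.Ioo (-1:ℝ) 1
  · have hx' : -x ∈ Set.Ioo (-1:ℝ) 1 := ⟨by linarith [hx.2], by linarith [hx.1]⟩
    rw [Set.indicator_of_mem hx, Set.indicator_of_mem hx']
  · have hx' : -x ∉ Set.Ioo (-1:ℝ) 1 := fun h => hx ⟨by linarith [h.2], by linarith [h.1]⟩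
    rw [Set.indicator_of_notMem hx, Set.indicator_of_notMem hx']

/-- reflection of a polynomial -/
noncomputable def negP (p : Polynomial ℝ) : Polynomial ℝ := p.comp (-Polynomial.X)

lemma eval_negP (p : Polynomial ℝ) (x : ℝ) : (negP p).eval x = p.eval (-x) := by
  simp [negP]

lemma gegInner_negP (β : ℝ) (p q : Polynomial ℝ) :
    gegInner β (negP p) (negP q) = gegInner β p q := by
  unfold gegInner
  rw [show (∫ x in Set.Ioo (-1:ℝ) 1,
      (negP p).eval x * (negP q).eval x * (1 - x^2) ^ (β - 1/2)) =
      ∫ x in Set.Ioo (-1:ℝ) 1, p.eval (-x) * q.eval (-x) * (1 - (-x)^2) ^ (β - 1/2) by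
    congr 1; ext x; rw [eval_negP, eval_negP]; ring_nf]
  exact setIntegral_Ioo_comp_neg (fun x => p.eval x * q.eval x * (1 - x^2) ^ (β - 1/2))

end GegAux


namespace GegAux

lemma coeff_negP (p : Polynomial ℝ) (k : ℕ) : (negP p).coeff k = (-1)^k * p.coeff k := by
  induction p using Polynomial.induction_on' with
  | add f g hf hg => simp only [negP, Polynomial.add_comp, Polynomial.coeff_add] at *
                     rw [hf, hg]; ring
  | monomial m a =>
    simp only [negP, Polynomial.monomial_comp]
    rw [show (-Polynomial.X : Polynomial ℝ) = (-1 : ℝ) • Polynomial.X by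
      simp [Polynomial.smul_eq_C_mul]]
    rw [_root_.smul_pow, mul_smul_comm, Polynomial.coeff_smul, Polynomial.coeff_C_mul,
      Polynomial.coeff_X_pow, Polynomial.coeff_monomial, smul_eq_mul]
    by_cases h : k = m
    · subst h; simp
    · simp [h, Ne.symm h]

lemma natDegree_negP (p : Polynomial ℝ) : (negP p).natDegree = p.natDegree := by
  simp [negP, Polynomial.natDegree_comp]

lemma derivative_negP (p : Polynomial ℝ) :
    derivative (negP p) = -negP (derivative p) := by
  simp [negP, Polynomial.derivative_comp]

end GegAux

namespace GegAux

lemma negP_negP (p : Polynomial ℝ) : negP (negP p) = p := by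
  unfold negP
  rw [Polynomial.comp_assoc]
  simp

lemma negP_ne_zero {p : Polynomial ℝ} (hp : p ≠ 0) : negP p ≠ 0 := by
  intro h
  apply hp
  rw [← negP_negP p, h]
  simp [negP]

lemma degree_negP (p : Polynomial ℝ) : (negP p).degree = p.degree := by
  by_cases hp : p = 0
  · subst hp; simp [negP]
  · rw [Polynomial.degree_eq_natDegree (negP_ne_zero hp), Polynomial.degree_eq_natDegree hp,
      natDegree_negP]

lemma gegInner_neg_neg (β : ℝ) (f g : Polynomial ℝ) :
    gegInner β (-f) (-g) = gegInner β f g := by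
  unfold gegInner; congr 1; ext x; simp

/-- Uniqueness of monic Gegenbauer polynomials. -/
lemma geg_unique {β : ℝ} (hβ : -1/2 < β) {m : ℕ} {P Q : Polynomial ℝ}
    (hP : IsMonicGegenbauer β m P) (hQ : IsMonicGegenbauer β m Q) : P = Q := by
  by_contra hne
  have hD : P - Q ≠ 0 := sub_ne_zero.mpr hne
  have hdeg : (P - Q).degree < (m : ℕ) := by
    have h1 : P.degree = Q.degree := by
      rw [Polynomial.degree_eq_natDegree hP.1.ne_zero, Polynomial.degree_eq_natDegree hQ.1.ne_zero,
        hP.2.1, hQ.2.1]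
    have := Polynomial.degree_sub_lt h1 hP.1.ne_zero (by rw [hP.1.leadingCoeff, hQ.1.leadingCoeff])
    rwa [Polynomial.degree_eq_natDegree hP.1.ne_zero, hP.2.1] at this
  have h0 : gegInner β (P - Q) (P - Q) = 0 := by
    rw [gegInner_sub_left hβ, hP.2.2 _ hdeg, hQ.2.2 _ hdeg, sub_zero]
  exact hD (eq_zero_of_gegInner_self hβ h0)

lemma smul_negP_monic {m : ℕ} {P : Polynomial ℝ} (hP : P.Monic) (hdeg : P.natDegree = m) :
    (((-1:ℝ)^m • negP P).Monic) ∧ ((-1:ℝ)^m • negP P).natDegree = m := by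
  subst hdeg
  have hne : ((-1:ℝ)^P.natDegree) ≠ 0 := by positivity
  have hnd : ((-1:ℝ)^P.natDegree • negP P).natDegree = P.natDegree := by
    rw [Polynomial.smul_eq_C_mul, Polynomial.natDegree_C_mul hne, natDegree_negP]
  refine ⟨?_, hnd⟩
  unfold Polynomial.Monic
  rw [Polynomial.leadingCoeff, hnd, Polynomial.coeff_smul, coeff_negP, smul_eq_mul,
    hP.coeff_natDegree, mul_one, ← pow_add]
  exact Even.neg_one_pow ⟨P.natDegree, rfl⟩

/-- Parity of monic Gegenbauer polynomials. -/
lemma geg_parity {β : ℝ} (hβ : -1/2 < β) {m : ℕ} {P : Polynomial ℝ}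
    (hP : IsMonicGegenbauer β m P) : (-1:ℝ)^m • negP P = P := by
  apply geg_unique hβ _ hP
  obtain ⟨hm, hd⟩ := smul_negP_monic hP.1 hP.2.1
  refine ⟨hm, hd, ?_⟩
  intro p hp
  rw [gegInner_smul_left]
  have : gegInner β (negP P) p = gegInner β P (negP p) := by
    conv_lhs => rw [show p = negP (negP p) from (negP_negP p).symm]
    exact gegInner_negP β P (negP p)
  rw [this, hP.2.2 (negP p) (by rwa [degree_negP]), mul_zero]

end GegAux

namespace GegAux

lemma sobInner_comm (β lam : ℝ) (f g : Polynomial ℝ) :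
    sobInner β lam f g = sobInner β lam g f := by
  unfold sobInner; rw [gegInner_comm, gegInner_comm β (derivative f)]

lemma sobInner_sub_left {β : ℝ} (hβ : -1/2 < β) (lam : ℝ) (f g h : Polynomial ℝ) :
    sobInner β lam (f - g) h = sobInner β lam f h - sobInner β lam g h := by
  unfold sobInner
  rw [gegInner_sub_left hβ, derivative_sub, gegInner_sub_left hβ]
  ring

lemma sobInner_add_left {β : ℝ} (hβ : -1/2 < β) (lam : ℝ) (f g h : Polynomial ℝ) :
    sobInner β lam (f + g) h = sobInner β lam f h + sobInner β lam g h := by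
  unfold sobInner
  rw [gegInner_add_left hβ, derivative_add, gegInner_add_left hβ]
  ring

lemma sobInner_smul_left (β lam c : ℝ) (f g : Polynomial ℝ) :
    sobInner β lam (c • f) g = c * sobInner β lam f g := by
  unfold sobInner
  rw [gegInner_smul_left, derivative_smul, gegInner_smul_left]
  ring

lemma sobInner_self_nonneg {β : ℝ} (lam : ℝ) (hlam : 0 ≤ lam) (f : Polynomial ℝ) :
    0 ≤ sobInner β lam f f :=
  add_nonneg (gegInner_self_nonneg β f)
    (mul_nonneg hlam (gegInner_self_nonneg β (derivative f)))

lemma eq_zero_of_sobInner_self {β : ℝ} (hβ : -1/2 < β) {lam : ℝ} (hlam : 0 ≤ lam)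
    {f : Polynomial ℝ} (h : sobInner β lam f f = 0) : f = 0 := by
  apply eq_zero_of_gegInner_self hβ
  unfold sobInner at h
  have h1 := gegInner_self_nonneg β f
  have h2 := mul_nonneg hlam (gegInner_self_nonneg β (derivative f))
  linarith

lemma sobInner_self_pos {β : ℝ} (hβ : -1/2 < β) {lam : ℝ} (hlam : 0 ≤ lam)
    {f : Polynomial ℝ} (hf : f ≠ 0) : 0 < sobInner β lam f f :=
  lt_of_le_of_ne (sobInner_self_nonneg lam hlam f)
    (fun h => hf (eq_zero_of_sobInner_self hβ hlam h.symm))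

/-- Uniqueness of monic Gegenbauer–Sobolev polynomials. -/
lemma sob_unique {β : ℝ} (hβ : -1/2 < β) {lam : ℝ} (hlam : 0 ≤ lam) {m : ℕ}
    {P Q : Polynomial ℝ} (hP : IsMonicGegSobolev β lam m P)
    (hQ : IsMonicGegSobolev β lam m Q) : P = Q := by
  by_contra hne
  have hD : P - Q ≠ 0 := sub_ne_zero.mpr hne
  have hdeg : (P - Q).degree < (m : ℕ) := by
    have h1 : P.degree = Q.degree := by
      rw [Polynomial.degree_eq_natDegree hP.1.ne_zero, Polynomial.degree_eq_natDegree hQ.1.ne_zero,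
        hP.2.1, hQ.2.1]
    have := Polynomial.degree_sub_lt h1 hP.1.ne_zero (by rw [hP.1.leadingCoeff, hQ.1.leadingCoeff])
    rwa [Polynomial.degree_eq_natDegree hP.1.ne_zero, hP.2.1] at this
  have h0 : sobInner β lam (P - Q) (P - Q) = 0 := by
    rw [sobInner_sub_left hβ, hP.2.2 _ hdeg, hQ.2.2 _ hdeg, sub_zero]
  exact hD (eq_zero_of_sobInner_self hβ hlam h0)

lemma sobInner_negP (β lam : ℝ) (f g : Polynomial ℝ) :
    sobInner β lam (negP f) (negP g) = sobInner β lam f g := by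
  unfold sobInner
  rw [gegInner_negP, derivative_negP, derivative_negP, gegInner_neg_neg, gegInner_negP]

/-- Parity of monic Gegenbauer–Sobolev polynomials. -/
lemma sob_parity {β : ℝ} (hβ : -1/2 < β) {lam : ℝ} (hlam : 0 ≤ lam) {m : ℕ}
    {P : Polynomial ℝ} (hP : IsMonicGegSobolev β lam m P) : (-1:ℝ)^m • negP P = P := by
  apply sob_unique hβ hlam _ hP
  obtain ⟨hm, hd⟩ := smul_negP_monic hP.1 hP.2.1
  refine ⟨hm, hd, ?_⟩
  intro p hp
  rw [sobInner_smul_left]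
  have : sobInner β lam (negP P) p = sobInner β lam P (negP p) := by
    conv_lhs => rw [show p = negP (negP p) from (negP_negP p).symm]
    exact sobInner_negP β lam P (negP p)
  rw [this, hP.2.2 (negP p) (by rwa [degree_negP]), mul_zero]

end GegAux

namespace GegAux

/-- shifting the parameter by one multiplies the weight by `(1-x²)`. -/
lemma weight_shift (β : ℝ) (f g : Polynomial ℝ) :
    gegInner (β + 1) f g = gegInner β ((1 - Polynomial.X^2) * f) g := by
  unfold gegInner
  apply setIntegral_congr_fun measurableSet_Ioo
  intro x hx
  have h := one_sub_sq_pos hx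
  have : (1 - x^2 : ℝ) ^ (β + 1 - 1/2) = (1 - x^2) * (1 - x^2) ^ (β - 1/2) := by
    rw [show (β + 1 - 1/2 : ℝ) = 1 + (β - 1/2) by ring, Real.rpow_add h, Real.rpow_one]
  simp only [Polynomial.eval_mul, Polynomial.eval_sub, Polynomial.eval_pow, Polynomial.eval_one,
    Polynomial.eval_X, this]
  ring

/-- The integration-by-parts identity. -/
lemma ibp {β : ℝ} (hβ : -1/2 < β) (f g : Polynomial ℝ) :
    gegInner (β + 1) (derivative f) g =
      gegInner β f ((2*β+1) • (Polynomial.X * g) - (1 - Polynomial.X^2) * derivative g) := by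
  set r : ℝ := β - 1/2 with hr
  have hr1 : (0:ℝ) < r + 1 := by rw [hr]; linarith
  -- the two integrands
  set A : ℝ → ℝ := fun x => (derivative f).eval x * g.eval x * (1 - x^2) ^ (r+1) with hA
  set P : Polynomial ℝ := (2*β+1) • (Polynomial.X * g) - (1 - Polynomial.X^2) * derivative g
    with hP
  have hPeval : ∀ x : ℝ, P.eval x =
      (2*β+1) * (x * g.eval x) - (1 - x^2) * (derivative g).eval x := by
    intro x
    simp [hP, Polynomial.eval_smul, smul_eq_mul]
  set B : ℝ → ℝ := fun x => f.eval x * P.eval x * (1 - x^2) ^ r with hB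
  set Φ : ℝ → ℝ := fun x => f.eval x * (g.eval x * (1 - x^2) ^ (r+1)) with hΦ
  set D : ℝ → ℝ := fun x => (derivative f).eval x * (g.eval x * (1 - x^2) ^ (r+1)) +
    f.eval x * ((derivative g).eval x * (1 - x^2) ^ (r+1) +
      g.eval x * ((-2*x) * (r+1) * (1 - x^2) ^ r)) with hD
  have hDAB : ∀ x ∈ Set.Ioo (-1:ℝ) 1, D x = A x - B x := by
    intro x hx
    have h := one_sub_sq_pos hx
    have e1 : (1 - x^2 : ℝ) ^ (r+1) = (1 - x^2) * (1 - x^2) ^ r := by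
      rw [show (r + 1 : ℝ) = 1 + r by ring, Real.rpow_add h, Real.rpow_one]
    show (derivative f).eval x * (g.eval x * (1 - x^2) ^ (r+1)) +
        f.eval x * ((derivative g).eval x * (1 - x^2) ^ (r+1) +
          g.eval x * ((-2*x) * (r+1) * (1 - x^2) ^ r)) =
      (derivative f).eval x * g.eval x * (1 - x^2) ^ (r+1) -
        f.eval x * P.eval x * (1 - x^2) ^ r
    rw [hPeval, e1]
    have h2 : (2*β+1 : ℝ) = 2*(r+1) := by rw [hr]; ring
    rw [h2]
    ring
  have hderiv : ∀ x ∈ Set.Ioo (-1:ℝ) 1, HasDerivAt Φ (D x) x := by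
    intro x hx
    have h := one_sub_sq_pos hx
    have hw : HasDerivAt (fun y : ℝ => (1 - y^2) ^ (r+1)) ((-2*x) * (r+1) * (1 - x^2) ^ r) x := by
      have hinner : HasDerivAt (fun y : ℝ => 1 - y^2) (-2*x) x := by
        simpa using ((hasDerivAt_pow 2 x).const_sub 1)
      have := hinner.rpow_const (p := r+1) (Or.inl h.ne')
      simpa [add_sub_cancel_right] using this
    have hgw : HasDerivAt (fun y : ℝ => g.eval y * (1 - y^2) ^ (r+1))
        ((derivative g).eval x * (1 - x^2) ^ (r+1) + g.eval x * ((-2*x) * (r+1) * (1 - x^2) ^ r))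
        x := (g.hasDerivAt x).mul hw
    exact (f.hasDerivAt x).mul hgw
  -- integrability
  have hintA : IntegrableOn A (Set.Ioo (-1:ℝ) 1) := by
    have h0 := integrable_gi (β := β + 1) (by linarith) (derivative f) g
    have e : (β + 1 - 1/2 : ℝ) = r + 1 := by rw [hr]; ring
    rw [e] at h0
    exact h0
  have hintB : IntegrableOn B (Set.Ioo (-1:ℝ) 1) := integrable_gi hβ f P
  have hintD : IntegrableOn D (Set.Ioo (-1:ℝ) 1) := by
    apply IntegrableOn.congr_fun (hintA.sub hintB) _ measurableSet_Ioo
    intro x hx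
    exact (hDAB x hx).symm
  -- endpoint limits
  have hlim : ∀ c : ℝ, c ∈ ({-1, 1} : Set ℝ) →
      Filter.Tendsto Φ (nhdsWithin c (Set.Ioo (-1:ℝ) 1)) (nhds 0) := by
    intro c hc
    have hbase : Filter.Tendsto (fun x : ℝ => 1 - x^2) (nhdsWithin c (Set.Ioo (-1:ℝ) 1))
        (nhds 0) := by
      have hc2 : (1 : ℝ) - c^2 = 0 := by
        rcases hc with h | h
        · rw [h]; ring
        · simp only [Set.mem_singleton_iff] at h; rw [h]; ring
      have h0 : Filter.Tendsto (fun x : ℝ => 1 - x^2) (nhds c) (nhds (1 - c^2)) :=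
        (continuous_const.sub (continuous_pow 2)).tendsto c
      rw [hc2] at h0
      exact h0.mono_left nhdsWithin_le_nhds
    have hpow : Filter.Tendsto (fun x : ℝ => (1 - x^2) ^ (r+1))
        (nhdsWithin c (Set.Ioo (-1:ℝ) 1)) (nhds 0) := by
      have hcont := Real.continuousAt_rpow_const 0 (r+1) (Or.inr hr1.le)
      have := hcont.tendsto.comp hbase
      rwa [Real.zero_rpow hr1.ne'] at this
    have hpoly : Filter.Tendsto (fun x : ℝ => f.eval x * g.eval x)
        (nhdsWithin c (Set.Ioo (-1:ℝ) 1)) (nhds (f.eval c * g.eval c)) :=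
      ((f.continuous_aeval.mul g.continuous_aeval).tendsto c).mono_left nhdsWithin_le_nhds
    have := hpoly.mul hpow
    rw [mul_zero] at this
    refine this.congr (fun x => ?_)
    rw [hΦ]; ring
  have hFTC : ∫ y in (-1:ℝ)..1, D y = 0 - 0 := by
    apply intervalIntegral.integral_eq_sub_of_hasDerivAt_of_tendsto
      (by norm_num : (-1:ℝ) < 1) hderiv
    · rw [intervalIntegrable_iff, Set.uIoc_of_le (by norm_num : (-1:ℝ) ≤ 1)]
      exact hintD.congr_set_ae (MeasureTheory.Ioo_ae_eq_Ioc (μ := volume) (a := (-1:ℝ)) (b := 1)).symm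
    · rw [← nhdsWithin_Ioo_eq_nhdsGT (by norm_num : (-1:ℝ) < 1)]
      exact hlim (-1) (Or.inl rfl)
    · rw [← nhdsWithin_Ioo_eq_nhdsLT (by norm_num : (-1:ℝ) < 1)]
      exact hlim 1 (Or.inr rfl)
  have e : (β + 1 - 1/2 : ℝ) = r + 1 := by rw [hr]; ring
  have h1 : gegInner (β+1) (derivative f) g = ∫ x in Set.Ioo (-1:ℝ) 1, A x := by
    unfold gegInner
    rw [e]
  have h2 : gegInner β f P = ∫ x in Set.Ioo (-1:ℝ) 1, B x := rfl
  have key : (∫ x in Set.Ioo (-1:ℝ) 1, A x) - (∫ x in Set.Ioo (-1:ℝ) 1, B x) = 0 := by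
    rw [← integral_sub hintA hintB]
    have h3 : ∫ x in Set.Ioo (-1:ℝ) 1, (A x - B x) = ∫ x in Set.Ioo (-1:ℝ) 1, D x :=
      setIntegral_congr_fun measurableSet_Ioo (fun x hx => (hDAB x hx).symm)
    have h4 : ∫ x in Set.Ioo (-1:ℝ) 1, D x = ∫ y in (-1:ℝ)..1, D y := by
      rw [intervalIntegral.integral_of_le (by norm_num : (-1:ℝ) ≤ 1),
        integral_Ioc_eq_integral_Ioo]
    rw [h3, h4, hFTC, sub_zero]
  rw [h1, h2]
  linarith [key]

end GegAux

namespace GegAux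

lemma dlt {q : Polynomial ℝ} {d k : ℕ} (h : q.natDegree ≤ d) (h2 : d < k) :
    q.degree < (k : ℕ) :=
  Polynomial.degree_le_natDegree.trans_lt (by exact_mod_cast lt_of_le_of_lt h h2)

lemma degree_lt_of_coeff {q : Polynomial ℝ} {m : ℕ} (h1 : q.natDegree ≤ m)
    (h2 : q.coeff m = 0) : q.degree < (m : ℕ) := by
  rw [Polynomial.degree_lt_iff_coeff_zero]
  intro k hk
  rcases eq_or_lt_of_le hk with h | h
  · exact_mod_cast h ▸ h2
  · exact Polynomial.coeff_eq_zero_of_natDegree_lt (by exact_mod_cast lt_of_le_of_lt h1 h)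

lemma gegInner_zero_right (β : ℝ) (f : Polynomial ℝ) : gegInner β f 0 = 0 := by
  unfold gegInner; simp

lemma gegInner_zero_left (β : ℝ) (f : Polynomial ℝ) : gegInner β 0 f = 0 := by
  rw [gegInner_comm]; exact gegInner_zero_right β f

lemma gegInner_mul_assoc (β : ℝ) (f g h : Polynomial ℝ) :
    gegInner β (f * g) h = gegInner β f (g * h) := by
  unfold gegInner; congr 1; ext x; simp only [Polynomial.eval_mul]; ring

lemma gegInner_neg_left (β : ℝ) (f g : Polynomial ℝ) :
    gegInner β (-f) g = -gegInner β f g := by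
  unfold gegInner
  rw [← integral_neg]
  congr 1; ext x; simp only [Polynomial.eval_neg]; ring

/-- Orthogonality of a `β`-orthogonal polynomial against low-degree polynomials
in the `(β+1)`-inner product. -/
lemma orth_shift {β : ℝ} {m : ℕ} {P : Polynomial ℝ}
    (hP : IsMonicGegenbauer β m P) (hm : 2 ≤ m) {q : Polynomial ℝ}
    (hq : q.degree < ((m - 2 : ℕ) : ℕ)) : gegInner (β + 1) P q = 0 := by
  by_cases h0 : q = 0
  · subst h0; exact gegInner_zero_right _ _
  · rw [gegInner_comm, weight_shift, gegInner_comm]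
    have hnd : q.natDegree < m - 2 := by
      rwa [Polynomial.degree_eq_natDegree h0, Nat.cast_lt] at hq
    apply hP.2.2
    apply dlt (d := 2 + q.natDegree)
    · calc ((1 - Polynomial.X^2) * q).natDegree ≤
          (1 - Polynomial.X^2 : Polynomial ℝ).natDegree + q.natDegree :=
            Polynomial.natDegree_mul_le
        _ ≤ 2 + q.natDegree := by
            gcongr
            rw [show (1 - Polynomial.X^2 : Polynomial ℝ) = -(Polynomial.X^2 - Polynomial.C 1) by
              simp]
            rw [Polynomial.natDegree_neg, Polynomial.natDegree_X_pow_sub_C]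
    · omega

/-- The derivative of a `β`-orthogonal polynomial is `(β+1)`-orthogonal. -/
lemma orth_deriv {β : ℝ} (hβ : -1/2 < β) {m : ℕ} {P : Polynomial ℝ}
    (hP : IsMonicGegenbauer β m P) {q : Polynomial ℝ}
    (hq : q.degree < ((m - 1 : ℕ) : ℕ)) : gegInner (β + 1) (derivative P) q = 0 := by
  by_cases h0 : q = 0
  · subst h0; exact gegInner_zero_right _ _
  have hnd : q.natDegree < m - 1 := by
    rwa [Polynomial.degree_eq_natDegree h0, Nat.cast_lt] at hq
  have hm : 2 ≤ m := by omega
  rw [ibp hβ]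
  apply hP.2.2
  have hXq : ((2*β+1) • (Polynomial.X * q)).natDegree ≤ 1 + q.natDegree :=
    (Polynomial.natDegree_smul_le _ _).trans
      (Polynomial.natDegree_mul_le.trans (by simp))
  by_cases hq' : derivative q = 0
  · rw [hq', mul_zero, sub_zero]
    exact dlt hXq (by omega)
  · have h1 : ((1 - Polynomial.X^2) * derivative q).natDegree ≤ 2 + (derivative q).natDegree := by
      calc ((1 - Polynomial.X^2) * derivative q).natDegree ≤
          (1 - Polynomial.X^2 : Polynomial ℝ).natDegree + (derivative q).natDegree :=
            Polynomial.natDegree_mul_le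
        _ ≤ 2 + (derivative q).natDegree := by
            gcongr
            rw [show (1 - Polynomial.X^2 : Polynomial ℝ) = -(Polynomial.X^2 - Polynomial.C 1) by
              simp]
            rw [Polynomial.natDegree_neg, Polynomial.natDegree_X_pow_sub_C]
    have h2 : (derivative q).natDegree < q.natDegree := by
      apply Polynomial.natDegree_derivative_lt
      intro h
      exact hq' (by
        obtain ⟨a, ha⟩ := Polynomial.natDegree_eq_zero.mp h
        rw [← ha]; simp)
    apply dlt (d := max (1 + q.natDegree) (2 + (derivative q).natDegree))
    · exact (Polynomial.natDegree_sub_le _ _).trans (max_le_max hXq h1)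
    · simp only [max_lt_iff]; omega

end GegAux

namespace GegAux

lemma natDegree_one_sub_X_sq : (1 - Polynomial.X^2 : Polynomial ℝ).natDegree = 2 := by
  rw [show (1 - Polynomial.X^2 : Polynomial ℝ) = -(Polynomial.X^2 - Polynomial.C 1) by simp]
  rw [Polynomial.natDegree_neg, Polynomial.natDegree_X_pow_sub_C]

/-- The key coefficient identity for the bracket polynomial. -/
lemma bracket_decomp {β : ℝ} {m : ℕ} {P : Polynomial ℝ} (hP : P.Monic)
    (hdeg : P.natDegree = m) (hm : 1 ≤ m) :
    ((2*β+1) • (Polynomial.X * derivative P) - (1 - Polynomial.X^2) * derivative (derivative P)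
      - ((m:ℝ) * ((m:ℝ) + 2*β)) • P).degree < ((m : ℕ) : WithBot ℕ) := by
  set K : Polynomial ℝ := (2*β+1) • (Polynomial.X * derivative P)
    - (1 - Polynomial.X^2) * derivative (derivative P) with hK
  have hd1 : (derivative P).natDegree ≤ m - 1 := hdeg ▸ Polynomial.natDegree_derivative_le P
  have hd2 : (derivative (derivative P)).natDegree ≤ m - 1 - 1 :=
    (Polynomial.natDegree_derivative_le _).trans (by omega)
  have hKdeg : K.natDegree ≤ m := by
    apply (Polynomial.natDegree_sub_le _ _).trans
    apply max_le
    · exact (Polynomial.natDegree_smul_le _ _).trans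
        (Polynomial.natDegree_mul_le.trans (by simp; omega))
    · by_cases h0 : derivative (derivative P) = 0
      · rw [h0, mul_zero]; simp
      · exact Polynomial.natDegree_mul_le.trans
          (by rw [natDegree_one_sub_X_sq]
              have : (derivative (derivative P)).natDegree < m - 1 ∨ m = 1 := by
                by_cases hm1 : m = 1
                · exact Or.inr hm1
                · left
                  rcases Nat.lt_or_ge (derivative P).natDegree 1 with h | h
                  · have : derivative (derivative P) = 0 := by
                      obtain ⟨a, ha⟩ := Polynomial.natDegree_eq_zero.mp (by omega : (derivative P).natDegree = 0)
                      rw [← ha]; simp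
                    exact absurd this h0
                  · have := Polynomial.natDegree_derivative_lt
                      (p := derivative P) (by omega)
                    omega
              rcases this with h | h
              · omega
              · subst h
                have : derivative (derivative P) = 0 := by
                  obtain ⟨a, ha⟩ := Polynomial.natDegree_eq_zero.mp (by omega : (derivative P).natDegree = 0)
                  rw [← ha]; simp
                exact absurd this h0)
  apply degree_lt_of_coeff
  · apply (Polynomial.natDegree_sub_le _ _).trans
    apply max_le hKdeg
    exact (Polynomial.natDegree_smul_le _ _).trans (le_of_eq hdeg)
  · -- coefficient of X^m vanishes
    have hPm : P.coeff m = 1 := hdeg ▸ hP.coeff_natDegree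
    have hc1 : (Polynomial.X * derivative P).coeff m = (m:ℝ) := by
      obtain ⟨m', rfl⟩ : ∃ m', m = m' + 1 := ⟨m - 1, by omega⟩
      rw [Polynomial.coeff_X_mul, Polynomial.coeff_derivative, hPm]
      push_cast; ring
    have hc2 : ((1 - Polynomial.X^2) * derivative (derivative P)).coeff m
        = -((m:ℝ) * ((m:ℝ) - 1)) := by
      have e : (1 - Polynomial.X^2) * derivative (derivative P)
          = derivative (derivative P) - Polynomial.X^2 * derivative (derivative P) := by ring
      rw [e, Polynomial.coeff_sub]
      have hz : (derivative (derivative P)).coeff m = 0 :=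
        Polynomial.coeff_eq_zero_of_natDegree_lt (by omega)
      rw [hz, zero_sub]
      rcases Nat.lt_or_ge m 2 with h | h
      · -- m = 1 : second derivative is zero
        have h1 : m = 1 := by omega
        subst h1
        have : derivative (derivative P) = 0 := by
          obtain ⟨a, ha⟩ := Polynomial.natDegree_eq_zero.mp (by omega : (derivative P).natDegree = 0)
          rw [← ha]; simp
        rw [this]; simp
      · obtain ⟨m', rfl⟩ : ∃ m', m = m' + 2 := ⟨m - 2, by omega⟩
        rw [Polynomial.coeff_X_pow_mul, Polynomial.coeff_derivative, Polynomial.coeff_derivative]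
        rw [show m' + 1 + 1 = m' + 2 from rfl, hPm]
        push_cast; ring
    rw [Polynomial.coeff_sub, Polynomial.coeff_sub, Polynomial.coeff_smul, Polynomial.coeff_smul,
      hc1, hc2, hPm, smul_eq_mul, smul_eq_mul]
    ring

/-- Norm relation between a polynomial and its derivative. -/
lemma norm_step {β : ℝ} (hβ : -1/2 < β) {m : ℕ} {P : Polynomial ℝ}
    (hP : IsMonicGegenbauer β m P) (hm : 1 ≤ m) :
    gegInner (β+1) (derivative P) (derivative P)
      = (m:ℝ) * ((m:ℝ) + 2*β) * gegInner β P P := by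
  rw [ibp hβ]
  set c : ℝ := (m:ℝ) * ((m:ℝ) + 2*β) with hc
  set K : Polynomial ℝ := (2*β+1) • (Polynomial.X * derivative P)
    - (1 - Polynomial.X^2) * derivative (derivative P) with hK
  have hR := bracket_decomp (β := β) hP.1 hP.2.1 hm
  have h0 := hP.2.2 _ hR
  rw [gegInner_sub_right (by linarith : -1/2 < β), gegInner_smul_right] at h0
  rw [hK, hc]
  linarith

/-- The normalized derivative of a monic Gegenbauer polynomial is monic Gegenbauer. -/
lemma deriv_monic_geg {β : ℝ} (hβ : -1/2 < β) {m : ℕ} {P : Polynomial ℝ}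
    (hP : IsMonicGegenbauer β m P) (hm : 1 ≤ m) :
    IsMonicGegenbauer (β+1) (m-1) (((m:ℝ)⁻¹) • derivative P) := by
  have hmne : ((m:ℝ)) ≠ 0 := Nat.cast_ne_zero.mpr (by omega)
  have hcoeff : (derivative P).coeff (m-1) = (m:ℝ) := by
    obtain ⟨m', rfl⟩ : ∃ m', m = m' + 1 := ⟨m - 1, by omega⟩
    rw [show m' + 1 - 1 = m' from rfl, Polynomial.coeff_derivative,
      show m' + 1 = P.natDegree from hP.2.1.symm, hP.1.coeff_natDegree]
    push_cast [hP.2.1]; ring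
  have hnd : (derivative P).natDegree = m - 1 := by
    apply le_antisymm ((Polynomial.natDegree_derivative_le P).trans (by rw [hP.2.1]))
    by_contra h
    push_neg at h
    have := Polynomial.coeff_eq_zero_of_natDegree_lt h
    rw [hcoeff] at this
    exact hmne this
  have hndsmul : (((m:ℝ)⁻¹) • derivative P).natDegree = m - 1 := by
    rw [Polynomial.smul_eq_C_mul, Polynomial.natDegree_C_mul (by simpa using hmne), hnd]
  refine ⟨?_, hndsmul, ?_⟩
  · unfold Polynomial.Monic
    rw [Polynomial.leadingCoeff, hndsmul, Polynomial.coeff_smul, hcoeff, smul_eq_mul,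
      inv_mul_cancel₀ hmne]
  · intro p hp
    rw [gegInner_smul_left]
    rw [orth_deriv hβ hP hp, mul_zero]

end GegAux

namespace GegAux

/-- Norm of a monic orthogonal polynomial in terms of its normalized derivative. -/
lemma norm_lower {β : ℝ} (hβ : -1/2 < β) {m : ℕ} {P : Polynomial ℝ}
    (hP : IsMonicGegenbauer β m P) (hm : 1 ≤ m) :
    gegInner β P P = ((m:ℝ) / ((m:ℝ) + 2*β)) *
      gegInner (β+1) (((m:ℝ)⁻¹) • derivative P) (((m:ℝ)⁻¹) • derivative P) := by
  have hmne : ((m:ℝ)) ≠ 0 := Nat.cast_ne_zero.mpr (by omega)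
  have hm2β : (m:ℝ) + 2*β > 0 := by
    have : (1:ℝ) ≤ (m:ℝ) := by exact_mod_cast hm
    linarith
  rw [gegInner_smul_left, gegInner_smul_right, norm_step hβ hP hm]
  field_simp

/-- The full norm tower. -/
lemma towerNorm : ∀ (m : ℕ) (β : ℝ), -1/2 < β → ∀ P : Polynomial ℝ,
    IsMonicGegenbauer β m P →
    gegInner β P P = (∏ k ∈ Finset.range m, (((m:ℝ) - k) / ((m:ℝ) + k + 2*β))) *
      gegInner (β + (m:ℝ)) 1 1 := by
  intro m
  induction m with
  | zero =>
    intro β hβ P hP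
    have : P = 1 := hP.1.natDegree_eq_zero.mp hP.2.1
    subst this
    simp
  | succ m ih =>
    intro β hβ P hP
    have hm : 1 ≤ m + 1 := by omega
    have h1 := norm_lower hβ hP hm
    have h2 := deriv_monic_geg hβ hP hm
    rw [show m + 1 - 1 = m from rfl] at h2
    have h3 := ih (β+1) (by linarith) _ h2
    rw [h1, h3]
    have e1 : (β + 1 + (m:ℝ)) = β + ((m+1:ℕ):ℝ) := by push_cast; ring
    rw [e1, Finset.prod_range_succ']
    rw [show (∏ k ∈ Finset.range m, (((m:ℝ) - k) / ((m:ℝ) + k + 2*(β+1))))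
        = (∏ k ∈ Finset.range m, ((((m+1:ℕ):ℝ) - ((k+1:ℕ):ℝ)) / (((m+1:ℕ):ℝ) + ((k+1:ℕ):ℝ) + 2*β)))
        from Finset.prod_congr rfl (fun k _ => by push_cast; ring_nf)]
    push_cast
    ring

/-- The moment recursion. -/
lemma I_step {γ : ℝ} (hγ : -1/2 < γ) :
    gegInner (γ+1) 1 1 = ((2*γ+1) / (2*γ+2)) * gegInner γ 1 1 := by
  have hX : IsMonicGegenbauer γ 1 Polynomial.X := by
    refine ⟨Polynomial.monic_X, Polynomial.natDegree_X, ?_⟩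
    intro p hp
    obtain ⟨a, rfl⟩ : ∃ a, p = Polynomial.C a := by
      by_cases h0 : p = 0
      · exact ⟨0, by simp [h0]⟩
      · have hnd : p.natDegree = 0 := by
          rw [Polynomial.degree_eq_natDegree h0] at hp
          have : p.natDegree < 1 := by exact_mod_cast hp
          omega
        obtain ⟨a, ha⟩ := Polynomial.natDegree_eq_zero.mp hnd
        exact ⟨a, ha.symm⟩
    have h1 : gegInner γ Polynomial.X (Polynomial.C a)
        = gegInner γ (negP Polynomial.X) (negP (Polynomial.C a)) := (gegInner_negP _ _ _).symm
    have h2 : negP (Polynomial.X : Polynomial ℝ) = -Polynomial.X := by simp [negP]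
    have h3 : negP (Polynomial.C a) = Polynomial.C a := by simp [negP]
    rw [h2, h3, gegInner_neg_left] at h1
    linarith
  have hns := norm_step hγ hX le_rfl
  rw [Polynomial.derivative_X] at hns
  push_cast at hns
  have hshift : gegInner (γ+1) 1 1 = gegInner γ 1 1 - gegInner γ Polynomial.X Polynomial.X := by
    have h0 : gegInner (γ+1) 1 1 = gegInner γ ((1 - Polynomial.X^2) * 1) 1 := weight_shift γ 1 1
    have e : ((1 - Polynomial.X^2) * 1 : Polynomial ℝ) = 1 - Polynomial.X * Polynomial.X := by
      ring
    rw [e, gegInner_sub_left (by linarith), gegInner_mul_assoc, mul_one] at h0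
    exact h0
  have hpos : (0:ℝ) < 2*γ+1 := by linarith
  have hpos2 : (0:ℝ) < 2*γ+2 := by linarith
  have hX2 : gegInner γ Polynomial.X Polynomial.X = gegInner (γ+1) 1 1 / (2*γ+1) := by
    rw [hns]; field_simp; ring
  rw [hX2] at hshift
  have hq : gegInner (γ+1) 1 1 / (2*γ+1) * (2*γ+1) = gegInner (γ+1) 1 1 :=
    div_mul_cancel₀ _ hpos.ne'
  rw [div_mul_eq_mul_div, eq_div_iff hpos2.ne']
  linear_combination (2*γ+1) * hshift - hq

end GegAux

namespace GegAux

/-- The crucial norm-ratio identity. -/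
lemma norm_ratio {α : ℝ} (hα : 1/2 < α) {n : ℕ} (hn : 2 ≤ n) {Cm Cnm2 : Polynomial ℝ}
    (h1 : IsMonicGegenbauer (α-1) n Cm) (h2 : IsMonicGegenbauer α (n-2) Cnm2) :
    gegInner (α-1) Cm Cm =
      ((((n:ℝ)-2)+2) * (((n:ℝ)-2)+1) / (4*(((n:ℝ)-2)+α+1)*(((n:ℝ)-2)+α)))
        * gegInner α Cnm2 Cnm2 := by
  have hβ1 : -1/2 < α - 1 := by linarith
  have hβ : -1/2 < α := by linarith
  have ecast : ((n-2:ℕ):ℝ) = (n:ℝ) - 2 := by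
    push_cast [Nat.cast_sub hn]; ring
  have hn2 : (2:ℝ) ≤ (n:ℝ) := by exact_mod_cast hn
  have hH := towerNorm n (α-1) hβ1 Cm h1
  have hK := towerNorm (n-2) α hβ Cnm2 h2
  set γ : ℝ := α + ((n:ℝ) - 2) with hγdef
  have hγ : -1/2 < γ := by rw [hγdef]; linarith
  have hI := I_step (γ := γ) hγ
  -- rewrite the moment arguments
  have eargH : α - 1 + (n:ℝ) = γ + 1 := by rw [hγdef]; ring
  have eargK : α + ((n-2:ℕ):ℝ) = γ := by rw [hγdef, ecast]
  rw [eargH] at hH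
  rw [eargK] at hK
  rw [hI] at hH
  -- split the products
  rw [Finset.prod_div_distrib] at hH hK
  set D : ℕ → ℝ := fun k => (n:ℝ) + (k:ℝ) + 2*α - 2 with hD
  have hDpos : ∀ k : ℕ, 0 < D k := by
    intro k
    show (0:ℝ) < (n:ℝ) + (k:ℝ) + 2*α - 2
    have : (0:ℝ) ≤ (k:ℝ) := Nat.cast_nonneg k
    nlinarith
  -- identify the denominators in both towers with D
  have hdenH : (∏ k ∈ Finset.range n, ((n:ℝ) + (k:ℝ) + 2*(α-1))) = ∏ k ∈ Finset.range n, D k :=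
    Finset.prod_congr rfl (fun k _ => by
      show (n:ℝ) + (k:ℝ) + 2*(α-1) = (n:ℝ) + (k:ℝ) + 2*α - 2
      ring)
  have hdenK : (∏ k ∈ Finset.range (n-2), (((n-2:ℕ):ℝ) + (k:ℝ) + 2*α))
      = ∏ k ∈ Finset.range (n-2), D k :=
    Finset.prod_congr rfl (fun k _ => by
      show ((n-2:ℕ):ℝ) + (k:ℝ) + 2*α = (n:ℝ) + (k:ℝ) + 2*α - 2
      rw [ecast]; ring)
  rw [hdenH] at hH
  rw [hdenK] at hK
  -- numerator and denominator relations
  obtain ⟨m, hm⟩ : ∃ m, n = m + 2 := ⟨n - 2, by omega⟩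
  have hmn : n - 2 = m := by omega
  have fnum : (∏ k ∈ Finset.range n, ((n:ℝ) - (k:ℝ)))
      = (∏ k ∈ Finset.range (n-2), (((n-2:ℕ):ℝ) - (k:ℝ))) * ((n:ℝ) - 1) * (n:ℝ) := by
    subst hm
    rw [show m + 2 - 2 = m from by omega]
    rw [Finset.prod_range_succ', Finset.prod_range_succ']
    rw [show (∏ k ∈ Finset.range m, (((m+2:ℕ):ℝ) - ((k+1+1:ℕ)))) =
        ∏ k ∈ Finset.range m, (((m:ℕ):ℝ) - (k:ℝ)) from
      Finset.prod_congr rfl (fun k _ => by push_cast; ring)]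
    push_cast
    ring
  have fden : (∏ k ∈ Finset.range n, D k)
      = (∏ k ∈ Finset.range (n-2), D k) * D (n-2) * D (n-1) := by
    subst hm
    rw [show m + 2 - 2 = m from by omega, show m + 2 - 1 = m + 1 from by omega]
    rw [Finset.prod_range_succ, Finset.prod_range_succ]
  rw [fnum, fden] at hH
  rw [hH, hK]
  -- now pure field arithmetic
  have hDm2 : D (n-2) = 2*γ := by
    show (n:ℝ) + ((n-2:ℕ):ℝ) + 2*α - 2 = 2*γ
    rw [ecast, hγdef]; ring
  have hDm1 : D (n-1) = 2*γ + 1 := by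
    show (n:ℝ) + ((n-1:ℕ):ℝ) + 2*α - 2 = 2*γ + 1
    rw [Nat.cast_sub (by omega : 1 ≤ n), hγdef]
    push_cast; ring
  have hprodpos : 0 < ∏ k ∈ Finset.range (n-2), D k :=
    Finset.prod_pos (fun k _ => hDpos k)
  have hγpos : 0 < γ := by rw [hγdef]; linarith
  have h2γ1 : (0:ℝ) < 2*γ+1 := by linarith
  have h2γ2 : (0:ℝ) < 2*γ+2 := by linarith
  rw [hDm2, hDm1]
  have e1 : (((n:ℝ)-2)+2) * (((n:ℝ)-2)+1) = (n:ℝ) * ((n:ℝ)-1) := by ring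
  have e2 : (4*(((n:ℝ)-2)+α+1)*(((n:ℝ)-2)+α)) = (2*γ+2) * (2*γ) := by rw [hγdef]; ring
  rw [e1, e2]
  field_simp
end GegAux

namespace GegAux

lemma coeff_pred_zero {P : Polynomial ℝ} {m : ℕ} (h : (-1:ℝ)^m • negP P = P)
    (hm : 1 ≤ m) : P.coeff (m-1) = 0 := by
  have hc : ((-1:ℝ)^m • negP P).coeff (m-1) = P.coeff (m-1) := by rw [h]
  rw [Polynomial.coeff_smul, coeff_negP, smul_eq_mul] at hc
  obtain ⟨m', rfl⟩ : ∃ m', m = m' + 1 := ⟨m - 1, by omega⟩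
  rw [show m' + 1 - 1 = m' from rfl] at hc ⊢
  rw [pow_succ] at hc
  have hsq : ((-1:ℝ)^m' * (-1:ℝ)^m') = 1 := by
    rw [← pow_add]; exact Even.neg_one_pow ⟨m', rfl⟩
  nlinarith [hc, hsq]

end GegAux

open GegAux in
/-- Connection formula between monic Gegenbauer and Gegenbauer–Sobolev polynomials. -/
theorem gegSobolev_connection_formula (α lam : ℝ) (hα : 1/2 < α) (hlam : 0 ≤ lam)
    (n : ℕ) (hn : 2 ≤ n)
    (Cm Cnm2 Qn Qnm2 : Polynomial ℝ)
    (h1 : IsMonicGegenbauer (α - 1) n Cm)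
    (h2 : IsMonicGegenbauer α (n - 2) Cnm2)
    (h3 : IsMonicGegSobolev α lam n Qn)
    (h4 : IsMonicGegSobolev α lam (n - 2) Qnm2) :
    ∀ x : ℝ, Cm.eval x =
      Qn.eval x -
        ((((n : ℝ) - 2) + 2) * (((n : ℝ) - 2) + 1) /
              (4 * (((n : ℝ) - 2) + α + 1) * (((n : ℝ) - 2) + α)) *
            gegInner α Cnm2 Cnm2 / sobInner α lam Qnm2 Qnm2) * Qnm2.eval x := by
  have hβ : -1/2 < α := by linarith
  have hβ1 : -1/2 < α - 1 := by linarith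
  set ξ : ℝ := (((n : ℝ) - 2) + 2) * (((n : ℝ) - 2) + 1) /
      (4 * (((n : ℝ) - 2) + α + 1) * (((n : ℝ) - 2) + α)) with hξ
  set K : ℝ := gegInner α Cnm2 Cnm2 with hKdef
  set S : ℝ := sobInner α lam Qnm2 Qnm2 with hSdef
  have hSpos : 0 < S := sobInner_self_pos hβ hlam h4.1.ne_zero
  set d : ℝ := ξ * K / S with hd
  set R : Polynomial ℝ := Cm - Qn + d • Qnm2 with hR
  -- basic orthogonality transfers
  have hA : ∀ q : Polynomial ℝ, q.degree < ((n - 2 : ℕ) : ℕ) → gegInner α Cm q = 0 := by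
    intro q hq
    have := orth_shift h1 hn hq
    rwa [show α - 1 + 1 = α from by ring] at this
  have hB : ∀ q : Polynomial ℝ, q.degree < ((n - 1 : ℕ) : ℕ) →
      gegInner α (derivative Cm) q = 0 := by
    intro q hq
    have := orth_deriv hβ1 h1 hq
    rwa [show α - 1 + 1 = α from by ring] at this
  have hC : ∀ q : Polynomial ℝ, q.degree < ((n - 2 : ℕ) : ℕ) → sobInner α lam Cm q = 0 := by
    intro q hq
    unfold sobInner
    rw [hA q hq, hB (derivative q) ?_, mul_zero, add_zero]
    by_cases h0 : q = 0
    · subst h0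
      simp only [derivative_zero, Polynomial.degree_zero]
      exact WithBot.bot_lt_coe _
    · have hnd : q.natDegree < n - 2 := by
        rwa [Polynomial.degree_eq_natDegree h0, Nat.cast_lt] at hq
      have := Polynomial.natDegree_derivative_le q
      exact dlt (le_refl (derivative q).natDegree) (by omega)
  -- the key inner product computation
  have hD1 : gegInner α Cm Qnm2 = -(gegInner (α-1) Cm Cm) := by
    have hdQ : Qnm2.degree = ((n-2:ℕ) : ℕ) := by
      rw [Polynomial.degree_eq_natDegree h4.1.ne_zero, h4.2.1]
    have hdC : Cnm2.degree = ((n-2:ℕ) : ℕ) := by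
      rw [Polynomial.degree_eq_natDegree h2.1.ne_zero, h2.2.1]
    have hsub : (Qnm2 - Cnm2).degree < ((n - 2 : ℕ) : ℕ) := by
      have := Polynomial.degree_sub_lt (hdQ.trans hdC.symm) h4.1.ne_zero
        (by rw [h4.1.leadingCoeff, h2.1.leadingCoeff])
      rwa [hdQ] at this
    have step1 : gegInner α Cm Qnm2 = gegInner α Cm Cnm2 := by
      rw [show Qnm2 = Cnm2 + (Qnm2 - Cnm2) from by ring, gegInner_add_right hβ,
        hA _ hsub, add_zero]
    have e0 := weight_shift (α-1) Cnm2 Cm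
    rw [show α - 1 + 1 = α from by ring] at e0
    -- e0 : gegInner α Cnm2 Cm = gegInner (α-1) ((1-X²)*Cnm2) Cm
    set t : Polynomial ℝ := (1 - Polynomial.X^2) * Cnm2 + Cm with hT
    have htdeg : t.degree < (n : ℕ) := by
      apply degree_lt_of_coeff
      · apply (Polynomial.natDegree_add_le _ _).trans
        apply max_le
        · exact Polynomial.natDegree_mul_le.trans
            (by rw [natDegree_one_sub_X_sq, h2.2.1]; omega)
        · exact le_of_eq h1.2.1
      · have e : ((1 - Polynomial.X^2) * Cnm2 : Polynomial ℝ)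
            = Cnm2 - Polynomial.X^2 * Cnm2 := by ring
        rw [Polynomial.coeff_add, e, Polynomial.coeff_sub]
        obtain ⟨m', hm'⟩ : ∃ m', n = m' + 2 := ⟨n - 2, by omega⟩
        have hc1 : Cnm2.coeff n = 0 :=
          Polynomial.coeff_eq_zero_of_natDegree_lt (by rw [h2.2.1]; omega)
        have hc2 : (Polynomial.X^2 * Cnm2).coeff n = 1 := by
          rw [hm', Polynomial.coeff_X_pow_mul]
          rw [show m' = n - 2 from by omega, ← h2.2.1]
          exact h2.1.coeff_natDegree
        have hc3 : Cm.coeff n = 1 := by rw [← h1.2.1]; exact h1.1.coeff_natDegree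
        rw [hc1, hc2, hc3]
        ring
    have step2 : gegInner (α-1) ((1 - Polynomial.X^2) * Cnm2) Cm
        = -(gegInner (α-1) Cm Cm) := by
      rw [show ((1 - Polynomial.X^2) * Cnm2 : Polynomial ℝ) = -Cm + t from by rw [hT]; ring,
        gegInner_add_left hβ1, gegInner_neg_left, gegInner_comm (α-1) t Cm,
        h1.2.2 t htdeg, add_zero]
    rw [step1, gegInner_comm, e0, step2]
  have hD : sobInner α lam Cm Qnm2 = -(gegInner (α-1) Cm Cm) := by
    unfold sobInner
    rw [hD1, hB (derivative Qnm2) ?_, mul_zero, add_zero]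
    have := Polynomial.natDegree_derivative_le Qnm2
    rw [h4.2.1] at this
    exact dlt this (by omega)
  -- the norm identity
  have hHK : gegInner (α-1) Cm Cm = ξ * K := norm_ratio hα hn h1 h2
  -- coefficients of R above degree n-2 vanish
  have hcoeffR : ∀ m : ℕ, n - 1 ≤ m → R.coeff m = 0 := by
    intro m hm
    have hQcoeff : Qnm2.coeff m = 0 :=
      Polynomial.coeff_eq_zero_of_natDegree_lt (by rw [h4.2.1]; omega)
    rw [hR, Polynomial.coeff_add, Polynomial.coeff_sub, Polynomial.coeff_smul, hQcoeff,
      smul_eq_mul, mul_zero, add_zero]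
    rcases eq_or_lt_of_le hm with hm' | hm'
    · -- m = n - 1 : parity
      have hpC : Cm.coeff (n-1) = 0 :=
        coeff_pred_zero (geg_parity hβ1 h1) (by omega)
      have hpQ : Qn.coeff (n-1) = 0 :=
        coeff_pred_zero (sob_parity hβ hlam h3) (by omega)
      rw [← hm', hpC, hpQ, sub_zero]
    · rcases eq_or_lt_of_le (by omega : n ≤ m) with hm'' | hm''
      · have hc3 : Cm.coeff n = 1 := by rw [← h1.2.1]; exact h1.1.coeff_natDegree
        have hc4 : Qn.coeff n = 1 := by rw [← h3.2.1]; exact h3.1.coeff_natDegree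
        rw [← hm'', hc3, hc4, sub_self]
      · rw [Polynomial.coeff_eq_zero_of_natDegree_lt (by rw [h1.2.1]; omega),
          Polynomial.coeff_eq_zero_of_natDegree_lt (by rw [h3.2.1]; omega), sub_self]
  set c : ℝ := R.coeff (n-2) with hcdef
  set s : Polynomial ℝ := R - c • Qnm2 with hs
  have hdegs : s.degree < ((n - 2 : ℕ) : ℕ) := by
    apply degree_lt_of_coeff
    · apply (Polynomial.natDegree_sub_le _ _).trans
      apply max_le
      · -- natDegree R ≤ n - 2
        by_cases h0 : R = 0
        · rw [h0]; simp
        · by_contra hcon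
          push_neg at hcon
          have := hcoeffR R.natDegree (by omega)
          exact Polynomial.leadingCoeff_ne_zero.mpr h0 this
      · exact (Polynomial.natDegree_smul_le _ _).trans (le_of_eq h4.2.1)
    · rw [hs, Polynomial.coeff_sub, Polynomial.coeff_smul, smul_eq_mul, ← hcdef,
        show Qnm2.coeff (n-2) = 1 from by rw [← h4.2.1]; exact h4.1.coeff_natDegree]
      ring
  -- sobInner R with Qnm2 and with s
  have hexp : ∀ q : Polynomial ℝ, sobInner α lam R q
      = sobInner α lam Cm q - sobInner α lam Qn q + d * sobInner α lam Qnm2 q := by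
    intro q
    rw [hR, sobInner_add_left hβ, sobInner_sub_left hβ, sobInner_smul_left]
  have hRQ : sobInner α lam R Qnm2 = 0 := by
    rw [hexp, hD, hHK, h3.2.2 Qnm2 (dlt (le_of_eq h4.2.1) (by omega)), ← hSdef, hd]
    field_simp
    ring
  have hRs : sobInner α lam R s = 0 := by
    rw [hexp, hC s hdegs, h3.2.2 s (lt_of_lt_of_le hdegs (by exact_mod_cast (by omega : n - 2 ≤ n))),
      h4.2.2 s hdegs, mul_zero, sub_zero, add_zero]
  have hRR : sobInner α lam R R = 0 := by
    have hdecomp : R = c • Qnm2 + s := by rw [hs]; ring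
    calc sobInner α lam R R = sobInner α lam (c • Qnm2 + s) R := by rw [← hdecomp]
      _ = c * sobInner α lam Qnm2 R + sobInner α lam s R := by
          rw [sobInner_add_left hβ, sobInner_smul_left]
      _ = c * sobInner α lam R Qnm2 + sobInner α lam R s := by
          rw [sobInner_comm α lam Qnm2 R, sobInner_comm α lam s R]
      _ = 0 := by rw [hRQ, hRs]; ring
  have hR0 : R = 0 := eq_zero_of_sobInner_self hβ hlam hRR
  intro x
  have hpoly : Cm = Qn - d • Qnm2 := by
    have h := hR0
    rw [hR] at h
    linear_combination h
  rw [hpoly]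
  simp only [Polynomial.eval_sub, Polynomial.eval_smul, smul_eq_mul]
end

section
/- Let μ₀ and μ₁ be compactly supported finite positive Borel measures on ℝ such that the Sobolev inner product ⟨f,g⟩ = ∫ f g dμ₀ + ∫ f' g' dμ₁ is positive definite on real polynomials, and let Q_n be the monic real polynomial of degree n ≥ 1 orthogonal with respect to ⟨·,·⟩ to all real polynomials of degree less than n. If there exists a constant C ≥ 0 such that ‖x·p(x)‖ ≤ C‖p‖ for every real polynomial p, where ‖f‖ = ⟨f,f⟩^{1/2}, then every complex zero z of Q_n satisfies |z| ≤ C. -/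
open Polynomial MeasureTheory Real Set

/-- The Sobolev inner product associated to a pair of measures `(μ₀, μ₁)`. -/
noncomputable def sobInnerM (μ₀ μ₁ : Measure ℝ) (f g : Polynomial ℝ) : ℝ :=
  (∫ x, f.eval x * g.eval x ∂μ₀) +
    ∫ x, (derivative f).eval x * (derivative g).eval x ∂μ₁

lemma integrable_polyEval (μ : Measure ℝ) [IsFiniteMeasure μ]
    (h : ∃ K : Set ℝ, IsCompact K ∧ μ Kᶜ = 0) (p : Polynomial ℝ) :
    Integrable (fun x => p.eval x) μ := by
  obtain ⟨K, hK, hK0⟩ := h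
  obtain ⟨M, hM⟩ := hK.exists_bound_of_continuousOn (p.continuous_aeval.continuousOn)
  refine Integrable.mono' (integrable_const M) (p.continuous_aeval.aestronglyMeasurable) ?_
  have hae : ∀ᵐ x ∂μ, x ∈ K := by
    rw [MeasureTheory.ae_iff]
    exact hK0
  filter_upwards [hae] with x hx using hM x hx

lemma integrable_evalMul (μ : Measure ℝ) [IsFiniteMeasure μ]
    (h : ∃ K : Set ℝ, IsCompact K ∧ μ Kᶜ = 0) (p q : Polynomial ℝ) :
    Integrable (fun x => p.eval x * q.eval x) μ := by
  simpa [eval_mul] using integrable_polyEval μ h (p * q)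

section
variable (μ₀ μ₁ : Measure ℝ) [IsFiniteMeasure μ₀] [IsFiniteMeasure μ₁]

lemma sob_symm (f g : Polynomial ℝ) : sobInnerM μ₀ μ₁ f g = sobInnerM μ₀ μ₁ g f := by
  simp [sobInnerM, mul_comm]

lemma sob_add_right (hc0 : ∃ K : Set ℝ, IsCompact K ∧ μ₀ Kᶜ = 0)
    (hc1 : ∃ K : Set ℝ, IsCompact K ∧ μ₁ Kᶜ = 0) (f g h : Polynomial ℝ) :
    sobInnerM μ₀ μ₁ f (g + h) = sobInnerM μ₀ μ₁ f g + sobInnerM μ₀ μ₁ f h := by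
  unfold sobInnerM
  rw [derivative_add]
  simp only [eval_add, mul_add]
  rw [integral_add (integrable_evalMul μ₀ hc0 f g) (integrable_evalMul μ₀ hc0 f h),
    integral_add (integrable_evalMul μ₁ hc1 (derivative f) (derivative g))
      (integrable_evalMul μ₁ hc1 (derivative f) (derivative h))]
  ring

lemma sob_C_mul_right (c : ℝ) (f g : Polynomial ℝ) :
    sobInnerM μ₀ μ₁ f (C c * g) = c * sobInnerM μ₀ μ₁ f g := by
  unfold sobInnerM
  rw [derivative_C_mul]
  simp only [eval_mul, eval_C, mul_left_comm _ c, integral_const_mul]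
  ring

lemma sob_nonneg (p : Polynomial ℝ) : 0 ≤ sobInnerM μ₀ μ₁ p p :=
  add_nonneg (integral_nonneg fun _ => mul_self_nonneg _)
    (integral_nonneg fun _ => mul_self_nonneg _)

lemma sob_expand_add (hc0 : ∃ K : Set ℝ, IsCompact K ∧ μ₀ Kᶜ = 0)
    (hc1 : ∃ K : Set ℝ, IsCompact K ∧ μ₁ Kᶜ = 0) (f g : Polynomial ℝ) :
    sobInnerM μ₀ μ₁ (f + g) (f + g) =
      sobInnerM μ₀ μ₁ f f + 2 * sobInnerM μ₀ μ₁ f g + sobInnerM μ₀ μ₁ g g := by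
  rw [sob_add_right μ₀ μ₁ hc0 hc1, sob_symm μ₀ μ₁ (f + g) f, sob_symm μ₀ μ₁ (f + g) g,
    sob_add_right μ₀ μ₁ hc0 hc1, sob_add_right μ₀ μ₁ hc0 hc1, sob_symm μ₀ μ₁ g f]
  ring

lemma sob_C_mul_left (c : ℝ) (f g : Polynomial ℝ) :
    sobInnerM μ₀ μ₁ (C c * f) g = c * sobInnerM μ₀ μ₁ f g := by
  rw [sob_symm, sob_C_mul_right, sob_symm]

lemma sob_expand_comb (hc0 : ∃ K : Set ℝ, IsCompact K ∧ μ₀ Kᶜ = 0)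
    (hc1 : ∃ K : Set ℝ, IsCompact K ∧ μ₁ Kᶜ = 0) (a b : ℝ) (u v : Polynomial ℝ) :
    sobInnerM μ₀ μ₁ (C a * u + C b * v) (C a * u + C b * v) =
      a ^ 2 * sobInnerM μ₀ μ₁ u u + 2 * a * b * sobInnerM μ₀ μ₁ u v
        + b ^ 2 * sobInnerM μ₀ μ₁ v v := by
  rw [sob_expand_add μ₀ μ₁ hc0 hc1]
  simp only [sob_C_mul_left μ₀ μ₁, sob_C_mul_right μ₀ μ₁]
  ring
end
open Polynomial MeasureTheory Real Set

/-- apply `f : ℂ → ℝ` (with `f 0 = 0`) coefficientwise to a complex polynomial. -/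
noncomputable def compPart (f : ℂ → ℝ) (H : Polynomial ℂ) : Polynomial ℝ :=
  ∑ i ∈ H.support, Polynomial.monomial i (f (H.coeff i))

lemma compPart_coeff (f : ℂ → ℝ) (hf : f 0 = 0) (H : Polynomial ℂ) (n : ℕ) :
    (compPart f H).coeff n = f (H.coeff n) := by
  rw [compPart, finset_sum_coeff]
  simp only [coeff_monomial]
  rw [Finset.sum_ite_eq' H.support n]
  split_ifs with h
  · rfl
  · rw [Polynomial.notMem_support_iff.mp h, hf]

lemma compPart_decomp (H : Polynomial ℂ) :
    H = (compPart Complex.re H).map (algebraMap ℝ ℂ) +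
        Polynomial.C Complex.I * (compPart Complex.im H).map (algebraMap ℝ ℂ) := by
  ext n
  simp only [coeff_add, coeff_map, coeff_C_mul,
    compPart_coeff Complex.re Complex.zero_re, compPart_coeff Complex.im Complex.zero_im]
  simp [Complex.ext_iff]

lemma degree_C_mul_le' {c : ℝ} {p : Polynomial ℝ} : (C c * p).degree ≤ p.degree :=
  le_trans (degree_mul_le _ _) (by
    calc (C c).degree + p.degree ≤ 0 + p.degree := add_le_add degree_C_le le_rfl
    _ = p.degree := zero_add _)

/-- If the multiplication operator is bounded by `C` for the Sobolev inner product,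
then all (complex) zeros of the Sobolev orthogonal polynomials lie in the disc of
radius `C`. -/
theorem sobolev_zeros_in_disc (μ₀ μ₁ : Measure ℝ)
    [IsFiniteMeasure μ₀] [IsFiniteMeasure μ₁]
    (hc0 : ∃ K : Set ℝ, IsCompact K ∧ μ₀ Kᶜ = 0)
    (hc1 : ∃ K : Set ℝ, IsCompact K ∧ μ₁ Kᶜ = 0)
    (hposdef : ∀ p : Polynomial ℝ, sobInnerM μ₀ μ₁ p p = 0 → p = 0)
    (n : ℕ) (hn : 1 ≤ n) (Q : Polynomial ℝ)
    (hQmonic : Q.Monic) (hQdeg : Q.natDegree = n)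
    (hQorth : ∀ p : Polynomial ℝ, p.degree < (n : ℕ) → sobInnerM μ₀ μ₁ Q p = 0)
    (Cb : ℝ) (hCb : 0 ≤ Cb)
    (hbound : ∀ p : Polynomial ℝ,
      Real.sqrt (sobInnerM μ₀ μ₁ (X * p) (X * p)) ≤
        Cb * Real.sqrt (sobInnerM μ₀ μ₁ p p)) :
    ∀ z : ℂ, Polynomial.aeval z Q = 0 → ‖z‖ ≤ Cb := by
  
  intro z hz
  set a : ℝ := z.re with ha
  set b : ℝ := z.im with hb'
  -- factor Q over ℂ
  have hroot : IsRoot (Q.map (algebraMap ℝ ℂ)) z := by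
    rwa [IsRoot, eval_map, ← aeval_def]
  obtain ⟨H, hH⟩ := dvd_iff_isRoot.mpr hroot
  have hQmap : (Q.map (algebraMap ℝ ℂ)).degree = (n : WithBot ℕ) := by
    have hm : (Q.map (algebraMap ℝ ℂ)).Monic := hQmonic.map _
    rw [degree_eq_natDegree hm.ne_zero]
    rw [Q.natDegree_map_eq_of_injective (algebraMap ℝ ℂ).injective, hQdeg]
  have hH0 : H ≠ 0 := by
    rintro rfl
    rw [mul_zero] at hH
    rw [hH, degree_zero] at hQmap
    exact absurd hQmap (by simp)
  have hHdeg : H.degree < (n : ℕ) := by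
    have h1 : (1 : WithBot ℕ) + H.degree = (n : WithBot ℕ) := by
      rw [← degree_X_sub_C z, ← degree_mul, ← hH, hQmap]
    rw [degree_eq_natDegree hH0] at h1 ⊢
    have h2 : 1 + H.natDegree = n := by exact_mod_cast h1
    exact Nat.cast_lt.mpr (show H.natDegree < n by omega)
  set u : Polynomial ℝ := compPart Complex.re H with hu
  set v : Polynomial ℝ := compPart Complex.im H with hv
  have hcoeff_u : ∀ m, n ≤ m → u.coeff m = 0 := fun m hm => by
    rw [hu, compPart_coeff Complex.re Complex.zero_re,
      coeff_eq_zero_of_degree_lt (hHdeg.trans_le (by exact_mod_cast Nat.cast_le.mpr hm))]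
    rfl
  have hcoeff_v : ∀ m, n ≤ m → v.coeff m = 0 := fun m hm => by
    rw [hv, compPart_coeff Complex.im Complex.zero_im,
      coeff_eq_zero_of_degree_lt (hHdeg.trans_le (by exact_mod_cast Nat.cast_le.mpr hm))]
    rfl
  have hudeg : u.degree < (n : ℕ) := (degree_lt_iff_coeff_zero u n).mpr hcoeff_u
  have hvdeg : v.degree < (n : ℕ) := (degree_lt_iff_coeff_zero v n).mpr hcoeff_v
  -- the decomposition over ℂ
  have hdec : H = u.map (algebraMap ℝ ℂ) + C Complex.I * v.map (algebraMap ℝ ℂ) :=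
    compPart_decomp H
  have hz_decomp : (C z : Polynomial ℂ) = C (a : ℂ) + C (b : ℂ) * C Complex.I := by
    rw [← C_mul, ← C_add]
    congr 1
    exact (Complex.re_add_im z).symm
  have hI : (C Complex.I : Polynomial ℂ) * C Complex.I = -1 := by
    rw [← C_mul, Complex.I_mul_I, map_neg, map_one]
  have hexp : Q.map (algebraMap ℝ ℂ) =
      ((X - C (a : ℂ)) * u.map (algebraMap ℝ ℂ) + C (b : ℂ) * v.map (algebraMap ℝ ℂ)) +
        C Complex.I * ((X - C (a : ℂ)) * v.map (algebraMap ℝ ℂ)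
          - C (b : ℂ) * u.map (algebraMap ℝ ℂ)) := by
    rw [hH]
    nth_rewrite 1 [hdec]
    rw [hz_decomp]
    linear_combination (-(C (b : ℂ) * v.map (algebraMap ℝ ℂ))) * hI
  have hAmap : ((X - C a) * u + C b * v).map (algebraMap ℝ ℂ) =
      (X - C (a : ℂ)) * u.map (algebraMap ℝ ℂ) + C (b : ℂ) * v.map (algebraMap ℝ ℂ) := by
    simp [Polynomial.map_add, Polynomial.map_mul, Polynomial.map_sub, Polynomial.map_X,
      Polynomial.map_C]
  have hBmap : ((X - C a) * v - C b * u).map (algebraMap ℝ ℂ) =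
      (X - C (a : ℂ)) * v.map (algebraMap ℝ ℂ) - C (b : ℂ) * u.map (algebraMap ℝ ℂ) := by
    simp [Polynomial.map_sub, Polynomial.map_mul, Polynomial.map_X, Polynomial.map_C]
  rw [← hAmap, ← hBmap] at hexp
  have hcoeffs : ∀ m : ℕ, Q.coeff m = ((X - C a) * u + C b * v).coeff m ∧
      ((X - C a) * v - C b * u).coeff m = 0 := by
    intro m
    have h := congrArg (fun P => P.coeff m) hexp
    simp only [coeff_add, coeff_map, coeff_C_mul] at h
    constructor
    · have := congrArg Complex.re h
      simpa using this
    · have := congrArg Complex.im h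
      simpa using this.symm
  have hQA : Q = (X - C a) * u + C b * v := Polynomial.ext fun m => (hcoeffs m).1
  have hB : (X - C a) * v - C b * u = 0 := Polynomial.ext fun m => by
    simpa using (hcoeffs m).2
  -- multiplication relations
  have hXu : X * u = Q + (C a * u + C (-b) * v) := by
    rw [hQA, C_neg]; ring
  have hXv : X * v = C a * v + C b * u := by linear_combination hB
  -- nontriviality
  have huv : u ≠ 0 ∨ v ≠ 0 := by
    by_contra h
    push_neg at h
    exact hH0 (by rw [hdec, h.1, h.2]; simp)
  have hT : 0 < sobInnerM μ₀ μ₁ u u + sobInnerM μ₀ μ₁ v v := by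
    rcases huv with h | h
    · exact add_pos_of_pos_of_nonneg
        (lt_of_le_of_ne (sob_nonneg μ₀ μ₁ u) fun he => h (hposdef u he.symm))
        (sob_nonneg μ₀ μ₁ v)
    · exact add_pos_of_nonneg_of_pos (sob_nonneg μ₀ μ₁ u)
        (lt_of_le_of_ne (sob_nonneg μ₀ μ₁ v) fun he => h (hposdef v he.symm))
  -- expansion identities
  have hworth : sobInnerM μ₀ μ₁ Q (C a * u + C (-b) * v) = 0 := by
    refine hQorth _ (lt_of_le_of_lt (degree_add_le _ _) ?_)
    exact max_lt (lt_of_le_of_lt degree_C_mul_le' hudeg)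
      (lt_of_le_of_lt degree_C_mul_le' hvdeg)
  have key1 : sobInnerM μ₀ μ₁ (X * u) (X * u) =
      sobInnerM μ₀ μ₁ Q Q +
        (a ^ 2 * sobInnerM μ₀ μ₁ u u + 2 * a * (-b) * sobInnerM μ₀ μ₁ u v
          + (-b) ^ 2 * sobInnerM μ₀ μ₁ v v) := by
    rw [hXu, sob_expand_add μ₀ μ₁ hc0 hc1, hworth, sob_expand_comb μ₀ μ₁ hc0 hc1]
    ring
  have key2 : sobInnerM μ₀ μ₁ (X * v) (X * v) =
      a ^ 2 * sobInnerM μ₀ μ₁ v v + 2 * a * b * sobInnerM μ₀ μ₁ v u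
        + b ^ 2 * sobInnerM μ₀ μ₁ u u := by
    rw [hXv, sob_expand_comb μ₀ μ₁ hc0 hc1]
  -- the operator bound squared
  have hbd : ∀ p : Polynomial ℝ, sobInnerM μ₀ μ₁ (X * p) (X * p) ≤
      Cb ^ 2 * sobInnerM μ₀ μ₁ p p := by
    intro p
    have h1 : sobInnerM μ₀ μ₁ (X * p) (X * p) ≤ (Cb * Real.sqrt (sobInnerM μ₀ μ₁ p p)) ^ 2 := by
      calc sobInnerM μ₀ μ₁ (X * p) (X * p)
          = Real.sqrt (sobInnerM μ₀ μ₁ (X * p) (X * p)) ^ 2 :=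
            (Real.sq_sqrt (sob_nonneg μ₀ μ₁ _)).symm
        _ ≤ _ := pow_le_pow_left₀ (Real.sqrt_nonneg _) (hbound p) 2
    rwa [mul_pow, Real.sq_sqrt (sob_nonneg μ₀ μ₁ p)] at h1
  have hsuv : sobInnerM μ₀ μ₁ v u = sobInnerM μ₀ μ₁ u v := sob_symm μ₀ μ₁ v u
  have hQQ : 0 ≤ sobInnerM μ₀ μ₁ Q Q := sob_nonneg μ₀ μ₁ Q
  have hfinal : a ^ 2 + b ^ 2 ≤ Cb ^ 2 := by
    have h1 := hbd u
    have h2 := hbd v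
    rw [key1] at h1
    rw [key2, hsuv] at h2
    nlinarith [hT, hQQ]
  rw [Complex.norm_def, Complex.normSq_apply, ← ha, ← hb']
  calc Real.sqrt (a * a + b * b) ≤ Real.sqrt (Cb ^ 2) :=
        Real.sqrt_le_sqrt (by nlinarith)
    _ = Cb := Real.sqrt_sq hCb
end
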